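/- Evaluation of expressions in safe-equivalent bindings yields safe-equivalent results: for the expression language with constants, variables, and binary operations whose taint is the lub of the operand taints, if B ≈ B' and B evaluates e to (v, σ) and B' evaluates e to (v', σ'), then (v, σ) ≈ (v', σ'). -/
import Mathlib


/-- Taints: S (safe) and U (unsafe). -/
inductive Taint | S | U
deriving DecidableEq

/-- Least upper bound of taints: S ⊔ S = S, otherwise U. -/
def Taint.lub : Taint → Taint → Taint
  | .S, .S => .S
  | _, _ => .U

/-- Tainted values. -/
abbrev TVal := ℕ × Taint

/-- Bindings from variable names to tainted values. -/
abbrev Bnd := String → Option TVal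

/-- Expressions: constants, variables, and binary operations. -/
inductive Expr
  | const (n : ℕ)
  | var (x : String)
  | op (f : ℕ → ℕ → ℕ) (e1 e2 : Expr)

/-- Tainted big-step evaluation of expressions: constants are safe, variables
take their binding, binary operations combine taints with the lub. -/
inductive Eval (B : Bnd) : Expr → TVal → Prop
  | const (n : ℕ) : Eval B (.const n) (n, Taint.S)
  | var (x : String) (p : TVal) : B x = some p → Eval B (.var x) p
  | op (f : ℕ → ℕ → ℕ) (e1 e2 : Expr) (v1 v2 : ℕ) (σ1 σ2 : Taint) :
      Eval B e1 (v1, σ1) → Eval B e2 (v2, σ2) →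
      Eval B (.op f e1 e2) (f v1 v2, σ1.lub σ2)

/-- Safe-equivalence of tainted values. -/
def VEq (p q : TVal) : Prop :=
  p.2 = q.2 ∧ (p.2 = Taint.S → p.1 = q.1)

/-- Safe-equivalence of bindings: same domain, safe-equivalent values. -/
def BEq' (B B' : Bnd) : Prop :=
  (∀ x, (B x).isSome ↔ (B' x).isSome) ∧
  (∀ x p q, B x = some p → B' x = some q → VEq p q)

/-- Evaluating the same expression in safe-equivalent bindings yields
safe-equivalent results. -/
theorem eval_veq (B B' : Bnd) (e : Expr) (p q : TVal)
    (hB : BEq' B B') (hp : Eval B e p) (hq : Eval B' e q) :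
    VEq p q := by
  induction e generalizing p q with
  | const n =>
    cases hp; cases hq; exact ⟨rfl, fun _ => rfl⟩
  | var x =>
    cases hp with | var _ _ h1 =>
    cases hq with | var _ _ h2 =>
    exact hB.2 x p q h1 h2
  | op f e1 e2 ih1 ih2 =>
    cases hp with | op _ _ _ v1 v2 σ1 σ2 h1 h2 =>
    cases hq with | op _ _ _ w1 w2 τ1 τ2 k1 k2 =>
    obtain ⟨hσ1, hv1⟩ := ih1 (v1, σ1) (w1, τ1) h1 k1
    obtain ⟨hσ2, hv2⟩ := ih2 (v2, σ2) (w2, τ2) h2 k2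
    subst hσ1; subst hσ2
    refine ⟨rfl, fun hs => ?_⟩
    cases σ1 <;> cases σ2 <;> simp_all [Taint.lub, VEq]
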